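/- Let p > m be positive integers and z₀ a positive real number with z₀ ≠ 1. Then (z₀^{−p} − z₀^{p}) / (z₀^{−m} − z₀^{m}) > p/m. -/
import Mathlib

open Real

lemma sinh_strictConvexOn : StrictConvexOn ℝ (Set.Ici (0:ℝ)) Real.sinh := by
  apply strictConvexOn_of_deriv2_pos (convex_Ici 0) Real.continuous_sinh.continuousOn
  intro x hx
  rw [interior_Ici] at hx
  have : deriv (deriv Real.sinh) = Real.sinh := by
    rw [Real.deriv_sinh, Real.deriv_cosh]
  rw [show (deriv^[2] Real.sinh) = Real.sinh by
    simp [Function.iterate_succ, Function.comp, Real.deriv_sinh, Real.deriv_cosh]]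
  exact Real.sinh_pos_iff.2 hx

lemma key (a b : ℝ) (ha : 0 < a) (hab : a < b) : b * Real.sinh a < a * Real.sinh b := by
  have hb : 0 < b := ha.trans hab
  have ht0 : 0 < a / b := div_pos ha hb
  have ht1 : a / b < 1 := (div_lt_one hb).2 hab
  have h := sinh_strictConvexOn.2 (Set.mem_Ici.2 le_rfl) (Set.mem_Ici.2 hb.le)
    (by positivity : (0:ℝ) ≠ b) (by linarith : (0:ℝ) < 1 - a/b) ht0
    (by ring : (1 - a/b) + a/b = 1)
  simp only [smul_eq_mul, mul_zero, Real.sinh_zero, zero_add, mul_zero, add_zero] at h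
  rw [show a / b * b = a by field_simp] at h
  calc b * Real.sinh a < b * (a / b * Real.sinh b) := by
        exact mul_lt_mul_of_pos_left h hb
    _ = a * Real.sinh b := by field_simp

/-- For positive integers `p > m` and `z₀ > 0`, `z₀ ≠ 1`,
`(z₀^{−p} − z₀^{p}) / (z₀^{−m} − z₀^{m}) > p/m`. -/
theorem ratio_gt (p m : ℕ) (hm : 0 < m) (hpm : m < p) (z₀ : ℝ) (hz : 0 < z₀) (hz1 : z₀ ≠ 1) :
    (z₀ ^ (-(p : ℤ)) - z₀ ^ (p : ℤ)) / (z₀ ^ (-(m : ℤ)) - z₀ ^ (m : ℤ)) > (p : ℝ) / m := by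
  set u := Real.log z₀ with hu
  have hu0 : u ≠ 0 := Real.log_ne_zero_of_pos_of_ne_one hz hz1
  have hpow : ∀ n : ℕ, z₀ ^ (-(n : ℤ)) - z₀ ^ (n : ℤ) = -2 * Real.sinh (n * u) := by
    intro n
    have hzn : z₀ ^ n = Real.exp (n * u) := by
      rw [← Real.exp_log hz, ← Real.exp_nat_mul]
    rw [zpow_neg, zpow_natCast, hzn, ← Real.exp_neg, Real.sinh_eq]
    ring
  rw [hpow, hpow]
  have hm' : (0:ℝ) < m := by exact_mod_cast hm
  have hp' : (0:ℝ) < p := by exact_mod_cast hm.trans hpm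
  have hmp : (m:ℝ) < p := by exact_mod_cast hpm
  have main : ∀ v : ℝ, 0 < v →
      (p : ℝ) / m < Real.sinh (p * v) / Real.sinh (m * v) := by
    intro v hv
    have h1 : (0:ℝ) < m * v := by positivity
    have h2 : (m:ℝ) * v < p * v := by nlinarith
    have hk := key (m * v) (p * v) h1 h2
    have hs : 0 < Real.sinh (m * v) := Real.sinh_pos_iff.2 h1
    rw [div_lt_div_iff₀ hm' hs]
    nlinarith
  rcases hu0.lt_or_gt with hneg | hpos
  · have h := main (-u) (by linarith)
    have e1 : Real.sinh ((p:ℝ) * -u) = - Real.sinh (p * u) := by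
      rw [← Real.sinh_neg]; ring_nf
    have e2 : Real.sinh ((m:ℝ) * -u) = - Real.sinh (m * u) := by
      rw [← Real.sinh_neg]; ring_nf
    rw [e1, e2] at h
    calc (p:ℝ)/m < (- Real.sinh (p*u)) / (- Real.sinh (m*u)) := h
      _ = (-2 * Real.sinh (p*u)) / (-2 * Real.sinh (m*u)) := by
          rw [show (-2:ℝ)*Real.sinh ((p:ℝ)*u) = 2 * -Real.sinh ((p:ℝ)*u) by ring,
            show (-2:ℝ)*Real.sinh ((m:ℝ)*u) = 2 * -Real.sinh ((m:ℝ)*u) by ring,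
            mul_div_mul_left _ _ (two_ne_zero)]
  · have h := main u hpos
    calc (p:ℝ)/m < Real.sinh (p*u) / Real.sinh (m*u) := h
      _ = (-2 * Real.sinh (p*u)) / (-2 * Real.sinh (m*u)) := by
          rw [mul_div_mul_left _ _ (by norm_num : (-2:ℝ) ≠ 0)]
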